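/- Let 𝔤 be the 4-dimensional real Lie algebra with basis e₁,e₂,e₃,e₄ and only nonzero bracket [e₁,e₂] = e₁ (the Lie algebra 𝔤_{2.1} ⊕ 2𝔤₁). A 4×4 real matrix R (viewed as a linear endomorphism of 𝔤 in this basis) can be written as R = η·Id + D for some real number η and some derivation D of 𝔤 if and only if R₂₁ = R₃₁ = R₄₁ = R₁₃ = R₁₄ = R₂₃ = R₂₄ = 0. In this case necessarily η = R₂₂. -/
import Mathlib

open Matrix

/-- The Lie bracket of the Lie algebra, in coordinates. -/
def br (x y : Fin 4 → ℝ) : Fin 4 → ℝ :=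
  ![(x 0 * y 1 - x 1 * y 0), (0:ℝ), (0:ℝ), (0:ℝ)]

/-- `D` (acting via `mulVec`) is a derivation of the bracket. -/
def IsDer (D : Matrix (Fin 4) (Fin 4) ℝ) : Prop :=
  ∀ x y : Fin 4 → ℝ, D.mulVec (br x y) = br (D.mulVec x) y + br x (D.mulVec y)

lemma der_facts (D : Matrix (Fin 4) (Fin 4) ℝ) (hD : IsDer D) :
    D 1 0 = 0 ∧ D 2 0 = 0 ∧ D 3 0 = 0 ∧ D 0 2 = 0 ∧ D 0 3 = 0 ∧ D 1 2 = 0 ∧ D 1 3 = 0 ∧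
      D 1 1 = 0 := by
  have h00 := congrFun (hD ![1,0,0,0] ![0,1,0,0]) 0
  have h1 := congrFun (hD ![1,0,0,0] ![0,1,0,0]) 1
  have h2 := congrFun (hD ![1,0,0,0] ![0,1,0,0]) 2
  have h3 := congrFun (hD ![1,0,0,0] ![0,1,0,0]) 3
  have h02 := congrFun (hD ![0,1,0,0] ![0,0,1,0]) 0
  have h03 := congrFun (hD ![0,1,0,0] ![0,0,0,1]) 0
  have h12 := congrFun (hD ![1,0,0,0] ![0,0,1,0]) 0
  have h13 := congrFun (hD ![1,0,0,0] ![0,0,0,1]) 0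
  simp [Matrix.mulVec, dotProduct, br, Fin.sum_univ_four] at h00 h1 h2 h3 h02 h03 h12 h13
  refine ⟨h1, h2, h3, by linarith, by linarith, h12.symm, h13.symm, by linarith⟩

theorem stmt_0 (R : Matrix (Fin 4) (Fin 4) ℝ) :
    ((∃ (η : ℝ) (D : Matrix (Fin 4) (Fin 4) ℝ), IsDer D ∧
        R = η • (1 : Matrix (Fin 4) (Fin 4) ℝ) + D) ↔
      (R 1 0 = 0 ∧ R 2 0 = 0 ∧ R 3 0 = 0 ∧ R 0 2 = 0 ∧ R 0 3 = 0 ∧ R 1 2 = 0 ∧ R 1 3 = 0)) ∧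
    (∀ (η : ℝ) (D : Matrix (Fin 4) (Fin 4) ℝ), IsDer D →
      R = η • (1 : Matrix (Fin 4) (Fin 4) ℝ) + D → η = R 1 1) := by
  constructor
  · constructor
    · rintro ⟨η, D, hD, rfl⟩
      obtain ⟨a1, a2, a3, a4, a5, a6, a7, a8⟩ := der_facts D hD
      simp [Matrix.one_apply, a1, a2, a3, a4, a5, a6, a7]
    · rintro ⟨h1, h2, h3, h4, h5, h6, h7⟩
      refine ⟨R 1 1, !![R 0 0 - R 1 1, R 0 1, 0, 0; 0, 0, 0, 0;
        0, R 2 1, R 2 2 - R 1 1, R 2 3; 0, R 3 1, R 3 2, R 3 3 - R 1 1], ?_, ?_⟩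
      · intro x y
        funext i
        fin_cases i <;>
          (simp [Matrix.mulVec, dotProduct, br, Fin.sum_univ_four]; try ring)
      · ext i j
        fin_cases i <;> fin_cases j <;>
          simp [Matrix.one_apply, Matrix.vecHead, Matrix.vecTail, h1, h2, h3, h4, h5, h6, h7] <;>
          try ring
  · intro η D hD hR
    obtain ⟨-, -, -, -, -, -, -, a8⟩ := der_facts D hD
    have := congrFun (congrFun hR 1) 1
    simp [Matrix.one_apply, a8] at this
    linarith
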